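/- For any charged partition γ and any residue i modulo n (n ≥ 2), the difference a_i(γ) − r_i(γ) between the number of addable i-colored boxes and the number of removable i-colored boxes of γ equals ⟨wt(γ), α_i⟩, where wt(γ) is the ŝl_n-weight of the basis vector ⟨γ| of Fock space; in particular this difference is finite. -/

import Mathlib

/-- A charged partition: an integer charge together with a partition
(weakly decreasing, eventually zero sequence of naturals). -/
structure ChargedPartition where
  charge : ℤ
  parts : ℕ → ℕ
  antitone : ∀ ⦃i j : ℕ⦄, i ≤ j → parts j ≤ parts i
  eventually_zero : ∃ N : ℕ, ∀ j : ℕ, N ≤ j → parts j = 0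

/-- `AddBox γ μ k` : μ is obtained from γ by adding one box of (integer) content `k`
(content = charge + column − row). -/
def AddBox (γ μ : ChargedPartition) (k : ℤ) : Prop :=
  μ.charge = γ.charge ∧
  ∃ r : ℕ, μ.parts = Function.update γ.parts r (γ.parts r + 1) ∧
    (γ.charge + (γ.parts r : ℤ) - (r : ℤ)) = k

/-- `RemoveBox γ μ k` : μ is obtained from γ by removing one box of content `k`. -/
def RemoveBox (γ μ : ChargedPartition) (k : ℤ) : Prop := AddBox μ γ k

/-- Removing one box whose color (content mod n) is `i`. -/
def RemoveBoxC (n : ℕ) (γ μ : ChargedPartition) (i : ZMod n) : Prop :=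
  ∃ k : ℤ, (k : ZMod n) = i ∧ RemoveBox γ μ k

/-- Adding one box whose color (content mod n) is `i`. -/
def AddBoxC (n : ℕ) (γ μ : ChargedPartition) (i : ZMod n) : Prop :=
  ∃ k : ℤ, (k : ZMod n) = i ∧ AddBox γ μ k

/-- Fermionic Fock space: the free ℂ-vector space on charged partitions. -/
abbrev Fock := ChargedPartition →₀ ℂ

/-- The Chevalley operator `E i` : ⟨γ|E_i = Σ ⟨μ| over μ obtained from γ by
removing one i-colored box. -/
noncomputable def Eop (n : ℕ) (i : ZMod n) : Fock →ₗ[ℂ] Fock :=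
  Finsupp.lift Fock ℂ ChargedPartition
    (fun γ => ∑ᶠ μ ∈ {μ : ChargedPartition | RemoveBoxC n γ μ i}, Finsupp.single μ (1 : ℂ))

/-- The Chevalley operator `F i` : ⟨γ|F_i = Σ ⟨μ| over μ obtained from γ by
adding one i-colored box. -/
noncomputable def Fop (n : ℕ) (i : ZMod n) : Fock →ₗ[ℂ] Fock :=
  Finsupp.lift Fock ℂ ChargedPartition
    (fun γ => ∑ᶠ μ ∈ {μ : ChargedPartition | AddBoxC n γ μ i}, Finsupp.single μ (1 : ℂ))

/-- The number of boxes of γ of color `c` (content mod n). -/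
noncomputable def boxCount (n : ℕ) (γ : ChargedPartition) (c : ZMod n) : ℕ :=
  Set.ncard {p : ℕ × ℕ | p.2 < γ.parts p.1 ∧
    ((γ.charge + (p.2 : ℤ) - (p.1 : ℤ) : ℤ) : ZMod n) = c}

namespace FockProof

noncomputable def beta (γ : ChargedPartition) (r : ℕ) : ℤ := (γ.parts r : ℤ) - r

lemma beta_strictAnti (γ : ChargedPartition) : StrictAnti (beta γ) := by
  apply strictAnti_nat_of_succ_lt
  intro r
  have := γ.antitone (show r ≤ r + 1 by omega)
  simp only [beta, Nat.succ_eq_add_one]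
  omega

lemma beta_lt {γ : ChargedPartition} {a b : ℕ} (h : a < b) : beta γ b < beta γ a :=
  beta_strictAnti γ h

lemma beta_inj {γ : ChargedPartition} {a b : ℕ} (h : beta γ a = beta γ b) : a = b :=
  (beta_strictAnti γ).injective h

lemma beta_add_le {γ : ChargedPartition} {a b : ℕ} (h : a ≤ b) :
    beta γ b + ((b : ℤ) - a) ≤ beta γ a := by
  have := γ.antitone h
  simp only [beta]
  omega

lemma cp_ext {γ μ : ChargedPartition} (h1 : γ.charge = μ.charge) (h2 : γ.parts = μ.parts) :
    γ = μ := by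
  cases γ; cases μ; simp_all

def inS (γ : ChargedPartition) (t : ℤ) : Prop := ∃ r, beta γ r = t

lemma le_of_inS {γ : ChargedPartition} {t : ℤ} (h : inS γ t) : t ≤ (γ.parts 0 : ℤ) := by
  obtain ⟨r, hr⟩ := h
  have : beta γ r ≤ beta γ 0 := (beta_strictAnti γ).antitone (Nat.zero_le r)
  simp only [beta] at this hr
  omega

lemma inS_of_le {γ : ChargedPartition} {N : ℕ} (hN : ∀ j, N ≤ j → γ.parts j = 0)
    {t : ℤ} (h : t ≤ -(N : ℤ)) : inS γ t := by
  refine ⟨(-t).toNat, ?_⟩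
  have h0 : ((-t).toNat : ℤ) = -t := Int.toNat_of_nonneg (by omega)
  have : γ.parts (-t).toNat = 0 := hN _ (by omega)
  simp only [beta, this]
  omega

lemma addBox_content {γ μ : ChargedPartition} {k : ℤ} (h : AddBox γ μ k) :
    ∃ r, μ.parts = Function.update γ.parts r (γ.parts r + 1) ∧ beta γ r = k - γ.charge := by
  obtain ⟨-, r, h1, h2⟩ := h
  exact ⟨r, h1, by simp only [beta]; omega⟩

lemma addBox_inS {γ μ : ChargedPartition} {k : ℤ} (h : AddBox γ μ k) :
    inS γ (k - γ.charge) := by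
  obtain ⟨r, -, h2⟩ := addBox_content h
  exact ⟨r, h2⟩

lemma addBox_not_inS {γ μ : ChargedPartition} {k : ℤ} (h : AddBox γ μ k) :
    ¬ inS γ (k - γ.charge + 1) := by
  obtain ⟨r, h1, h2⟩ := addBox_content h
  rintro ⟨r', hr'⟩
  have hlt : r' < r := by
    by_contra hc
    rcases Nat.lt_or_ge r' r with h' | h'
    · exact hc h'
    · rcases Nat.eq_or_lt_of_le h' with rfl | h'
      · omega
      · have := beta_lt (γ := γ) h'
        omega
  -- μ antitone between r' and r
  have hμ : μ.parts r ≤ μ.parts r' := μ.antitone hlt.le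
  have e1 : μ.parts r = γ.parts r + 1 := by rw [h1]; simp
  have e2 : μ.parts r' = γ.parts r' := by
    rw [h1, Function.update_apply, if_neg (by omega)]
  simp only [beta] at h2 hr'
  omega

lemma addBox_exists {γ : ChargedPartition} {t : ℤ} (h1 : inS γ t) (h2 : ¬ inS γ (t + 1)) :
    ∃ μ, AddBox γ μ (γ.charge + t) := by
  obtain ⟨r, hr⟩ := h1
  obtain ⟨N, hN⟩ := γ.eventually_zero
  have hanti : ∀ ⦃a b : ℕ⦄, a ≤ b →
      Function.update γ.parts r (γ.parts r + 1) b ≤ Function.update γ.parts r (γ.parts r + 1) a := by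
    intro a b hab
    simp only [Function.update_apply]
    rcases eq_or_ne a r with ha | ha <;> rcases eq_or_ne b r with hb | hb
    · simp [ha, hb]
    · subst ha
      rw [if_pos rfl, if_neg hb]
      have := γ.antitone hab
      omega
    · subst hb
      rw [if_pos rfl, if_neg ha]
      have har : a < b := lt_of_le_of_ne hab ha
      have hr1 : b - 1 < b := by omega
      have e : ((b - 1 : ℕ) : ℤ) = (b : ℤ) - 1 := by omega
      have hb1 : beta γ (b-1) + ((b:ℤ) - 1 - a) ≤ beta γ a := by
        have h' := beta_add_le (γ := γ) (show a ≤ b - 1 by omega)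
        rw [e] at h'
        exact h'
      have hb2 : t + 1 < beta γ (b - 1) := by
        have hne : beta γ (b-1) ≠ t + 1 := fun hc => h2 ⟨b - 1, hc⟩
        have hlt : beta γ b < beta γ (b-1) := beta_lt hr1
        omega
      simp only [beta] at hr hb1 hb2 ⊢
      omega
    · rw [if_neg ha, if_neg hb]
      exact γ.antitone hab
  have hev : ∀ j, N + r + 1 ≤ j → Function.update γ.parts r (γ.parts r + 1) j = 0 := by
    intro j hj
    rw [Function.update_apply, if_neg (by omega)]
    exact hN j (by omega)
  exact ⟨⟨γ.charge, Function.update γ.parts r (γ.parts r + 1), hanti, ⟨N + r + 1, hev⟩⟩,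
    rfl, r, rfl, by simp only [beta] at hr; omega⟩

lemma addBox_unique {γ μ μ' : ChargedPartition} {k : ℤ} (h : AddBox γ μ k)
    (h' : AddBox γ μ' k) : μ = μ' := by
  obtain ⟨r, h1, h2⟩ := addBox_content h
  obtain ⟨r', h1', h2'⟩ := addBox_content h'
  have hb : beta γ r = beta γ r' := by omega
  have : r = r' := beta_inj hb
  subst this
  exact cp_ext (h.1.trans h'.1.symm) (h1.trans h1'.symm)

lemma addBox_content_inj {γ μ : ChargedPartition} {k k' : ℤ} (h : AddBox γ μ k)
    (h' : AddBox γ μ k') : k = k' := by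
  obtain ⟨r, h1, h2⟩ := addBox_content h
  obtain ⟨r', h1', h2'⟩ := addBox_content h'
  have : r = r' := by
    by_contra hc
    have e1 : μ.parts r = γ.parts r + 1 := by rw [h1]; simp
    have e2 : μ.parts r = γ.parts r := by rw [h1', Function.update_apply, if_neg hc]
    omega
  subst this
  omega

end FockProof
namespace FockProof

lemma removeBox_content {γ μ : ChargedPartition} {k : ℤ} (h : RemoveBox γ μ k) :
    γ.charge = μ.charge ∧ ∃ r, γ.parts = Function.update μ.parts r (μ.parts r + 1) ∧
      beta γ r = k - γ.charge + 1 ∧ γ.parts r = μ.parts r + 1 ∧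
      (∀ j, j ≠ r → γ.parts j = μ.parts j) := by
  obtain ⟨hc, r, h1, h2⟩ := h
  refine ⟨hc, r, h1, ?_, ?_, ?_⟩
  · have : γ.parts r = μ.parts r + 1 := by rw [h1]; simp
    simp only [beta, this]
    omega
  · rw [h1]; simp
  · intro j hj
    rw [h1, Function.update_apply, if_neg hj]

lemma removeBox_inS {γ μ : ChargedPartition} {k : ℤ} (h : RemoveBox γ μ k) :
    inS γ (k - γ.charge + 1) := by
  obtain ⟨-, r, -, h2, -⟩ := removeBox_content h
  exact ⟨r, h2⟩

lemma removeBox_not_inS {γ μ : ChargedPartition} {k : ℤ} (h : RemoveBox γ μ k) :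
    ¬ inS γ (k - γ.charge) := by
  obtain ⟨-, r, -, h2, h3, h4⟩ := removeBox_content h
  rintro ⟨r', hr'⟩
  have hlt : r < r' := by
    by_contra hc
    rcases Nat.lt_or_ge r' r with h' | h'
    · have := beta_lt (γ := γ) h'
      omega
    · have : r = r' := by omega
      subst this
      omega
  have e2 : γ.parts r' = μ.parts r' := h4 r' (by omega)
  have hμ : μ.parts r' ≤ μ.parts r := μ.antitone hlt.le
  simp only [beta] at h2 hr'
  omega

lemma removeBox_exists {γ : ChargedPartition} {t : ℤ} (h1 : inS γ (t + 1)) (h2 : ¬ inS γ t) :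
    ∃ μ, RemoveBox γ μ (γ.charge + t) := by
  obtain ⟨r, hr⟩ := h1
  obtain ⟨N, hN⟩ := γ.eventually_zero
  -- γ.parts (r+1) + 1 ≤ γ.parts r  (so in particular γ.parts r ≥ 1)
  have hstep : γ.parts (r + 1) + 1 ≤ γ.parts r := by
    have hne : beta γ (r + 1) ≠ t := fun hc => h2 ⟨r + 1, hc⟩
    have hlt : beta γ (r + 1) < beta γ r := beta_lt (by omega)
    simp only [beta] at hne hlt hr
    omega
  have hpos : 1 ≤ γ.parts r := by omega
  set p : ℕ → ℕ := Function.update γ.parts r (γ.parts r - 1) with hp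
  have hanti : ∀ ⦃a b : ℕ⦄, a ≤ b → p b ≤ p a := by
    intro a b hab
    simp only [hp, Function.update_apply]
    rcases eq_or_ne a r with ha | ha <;> rcases eq_or_ne b r with hb | hb
    · simp [ha, hb]
    · subst ha
      rw [if_neg hb, if_pos rfl]
      have hlt : a < b := lt_of_le_of_ne hab (Ne.symm hb)
      have := γ.antitone (show a + 1 ≤ b by omega)
      omega
    · subst hb
      rw [if_neg ha, if_pos rfl]
      have := γ.antitone hab
      omega
    · rw [if_neg ha, if_neg hb]
      exact γ.antitone hab
  have hev : ∀ j, N + r + 1 ≤ j → p j = 0 := by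
    intro j hj
    simp only [hp, Function.update_apply]
    rw [if_neg (by omega)]
    exact hN j (by omega)
  refine ⟨⟨γ.charge, p, hanti, ⟨N + r + 1, hev⟩⟩, rfl, r, ?_, ?_⟩
  · funext j
    simp only [hp, Function.update_apply]
    rcases eq_or_ne j r with rfl | hj
    · simp [Nat.sub_add_cancel hpos]
    · simp [hj]
  · simp only [hp, Function.update_self]
    simp only [beta] at hr
    omega

lemma removeBox_unique {γ μ μ' : ChargedPartition} {k : ℤ} (h : RemoveBox γ μ k)
    (h' : RemoveBox γ μ' k) : μ = μ' := by
  obtain ⟨hc, r, -, h2, h3, h4⟩ := removeBox_content h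
  obtain ⟨hc', r', -, h2', h3', h4'⟩ := removeBox_content h'
  have hb : beta γ r = beta γ r' := by omega
  have : r = r' := beta_inj hb
  subst this
  apply cp_ext (hc.symm.trans hc')
  funext j
  rcases eq_or_ne j r with rfl | hj
  · omega
  · rw [← h4 j hj, ← h4' j hj]

lemma removeBox_content_inj {γ μ : ChargedPartition} {k k' : ℤ} (h : RemoveBox γ μ k)
    (h' : RemoveBox γ μ k') : k = k' := by
  obtain ⟨hc, r, -, h2, h3, h4⟩ := removeBox_content h
  obtain ⟨hc', r', -, h2', h3', h4'⟩ := removeBox_content h'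
  have : r = r' := by
    by_contra hcc
    have := h4' r (Ne.symm (fun hx => hcc hx.symm))
    omega
  subst this
  omega

end FockProof
namespace FockProof

def TaS (n : ℕ) (γ : ChargedPartition) (i : ZMod n) : Set ℤ :=
  {t | inS γ t ∧ ¬ inS γ (t + 1) ∧ ((γ.charge + t : ℤ) : ZMod n) = i}

def TrS (n : ℕ) (γ : ChargedPartition) (i : ZMod n) : Set ℤ :=
  {t | inS γ (t + 1) ∧ ¬ inS γ t ∧ ((γ.charge + t : ℤ) : ZMod n) = i}

open Classical in
noncomputable def addP (γ : ChargedPartition) (t : ℤ) : ChargedPartition :=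
  if h : inS γ t ∧ ¬ inS γ (t + 1) then (addBox_exists h.1 h.2).choose else γ

lemma addP_spec {γ : ChargedPartition} {t : ℤ} (h1 : inS γ t) (h2 : ¬ inS γ (t + 1)) :
    AddBox γ (addP γ t) (γ.charge + t) := by
  rw [addP, dif_pos ⟨h1, h2⟩]
  exact (addBox_exists h1 h2).choose_spec

open Classical in
noncomputable def remP (γ : ChargedPartition) (t : ℤ) : ChargedPartition :=
  if h : inS γ (t + 1) ∧ ¬ inS γ t then (removeBox_exists h.1 h.2).choose else γ

lemma remP_spec {γ : ChargedPartition} {t : ℤ} (h1 : inS γ (t + 1)) (h2 : ¬ inS γ t) :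
    RemoveBox γ (remP γ t) (γ.charge + t) := by
  rw [remP, dif_pos ⟨h1, h2⟩]
  exact (removeBox_exists h1 h2).choose_spec

lemma addSet_eq (n : ℕ) (γ : ChargedPartition) (i : ZMod n) :
    {μ : ChargedPartition | AddBoxC n γ μ i} = addP γ '' TaS n γ i := by
  ext μ
  constructor
  · rintro ⟨k, hk, hAdd⟩
    have h1 := addBox_inS hAdd
    have h2 := addBox_not_inS hAdd
    refine ⟨k - γ.charge, ⟨h1, h2, ?_⟩, ?_⟩
    · rw [show γ.charge + (k - γ.charge) = k by ring]; exact hk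
    · have hs := addP_spec h1 h2
      rw [show γ.charge + (k - γ.charge) = k by ring] at hs
      exact (addBox_unique hAdd hs).symm ▸ rfl
  · rintro ⟨t, ⟨h1, h2, h3⟩, rfl⟩
    exact ⟨γ.charge + t, h3, addP_spec h1 h2⟩

lemma remSet_eq (n : ℕ) (γ : ChargedPartition) (i : ZMod n) :
    {μ : ChargedPartition | RemoveBoxC n γ μ i} = remP γ '' TrS n γ i := by
  ext μ
  constructor
  · rintro ⟨k, hk, hRem⟩
    have h1 := removeBox_inS hRem
    have h2 := removeBox_not_inS hRem
    refine ⟨k - γ.charge, ⟨h1, h2, ?_⟩, ?_⟩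
    · rw [show γ.charge + (k - γ.charge) = k by ring]; exact hk
    · have hs := remP_spec h1 h2
      rw [show γ.charge + (k - γ.charge) = k by ring] at hs
      exact (removeBox_unique hRem hs).symm ▸ rfl
  · rintro ⟨t, ⟨h1, h2, h3⟩, rfl⟩
    exact ⟨γ.charge + t, h3, remP_spec h1 h2⟩

lemma addP_injOn (n : ℕ) (γ : ChargedPartition) (i : ZMod n) :
    Set.InjOn (addP γ) (TaS n γ i) := by
  rintro t ⟨h1, h2, -⟩ t' ⟨h1', h2', -⟩ heq
  have hs := addP_spec h1 h2
  have hs' := addP_spec h1' h2'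
  rw [← heq] at hs'
  have := addBox_content_inj hs hs'
  omega

lemma remP_injOn (n : ℕ) (γ : ChargedPartition) (i : ZMod n) :
    Set.InjOn (remP γ) (TrS n γ i) := by
  rintro t ⟨h1, h2, -⟩ t' ⟨h1', h2', -⟩ heq
  have hs := remP_spec h1 h2
  have hs' := remP_spec h1' h2'
  rw [← heq] at hs'
  have := removeBox_content_inj hs hs'
  omega

lemma TaS_subset (n : ℕ) (γ : ChargedPartition) (i : ZMod n) {N : ℕ}
    (hN : ∀ j, N ≤ j → γ.parts j = 0) :
    TaS n γ i ⊆ Set.Icc (-(N : ℤ)) (γ.parts 0 : ℤ) := by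
  rintro t ⟨h1, h2, -⟩
  have hu := le_of_inS h1
  have hl : ¬ (t + 1 ≤ -(N : ℤ)) := fun hc => h2 (inS_of_le hN hc)
  exact ⟨by omega, hu⟩

lemma TrS_subset (n : ℕ) (γ : ChargedPartition) (i : ZMod n) {N : ℕ}
    (hN : ∀ j, N ≤ j → γ.parts j = 0) :
    TrS n γ i ⊆ Set.Icc (-(N : ℤ)) (γ.parts 0 : ℤ) := by
  rintro t ⟨h1, h2, -⟩
  have hu := le_of_inS h1
  have hl : ¬ (t ≤ -(N : ℤ)) := fun hc => h2 (inS_of_le hN hc)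
  exact ⟨by omega, by omega⟩

lemma TaS_finite (n : ℕ) (γ : ChargedPartition) (i : ZMod n) : (TaS n γ i).Finite := by
  obtain ⟨N, hN⟩ := γ.eventually_zero
  exact (Set.finite_Icc _ _).subset (TaS_subset n γ i hN)

lemma TrS_finite (n : ℕ) (γ : ChargedPartition) (i : ZMod n) : (TrS n γ i).Finite := by
  obtain ⟨N, hN⟩ := γ.eventually_zero
  exact (Set.finite_Icc _ _).subset (TrS_subset n γ i hN)

lemma addSet_finite (n : ℕ) (γ : ChargedPartition) (i : ZMod n) :
    {μ : ChargedPartition | AddBoxC n γ μ i}.Finite := by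
  rw [addSet_eq]
  exact (TaS_finite n γ i).image _

lemma remSet_finite (n : ℕ) (γ : ChargedPartition) (i : ZMod n) :
    {μ : ChargedPartition | RemoveBoxC n γ μ i}.Finite := by
  rw [remSet_eq]
  exact (TrS_finite n γ i).image _

lemma addSet_ncard (n : ℕ) (γ : ChargedPartition) (i : ZMod n) :
    {μ : ChargedPartition | AddBoxC n γ μ i}.ncard = (TaS n γ i).ncard := by
  rw [addSet_eq]
  exact Set.ncard_image_of_injOn (addP_injOn n γ i)

lemma remSet_ncard (n : ℕ) (γ : ChargedPartition) (i : ZMod n) :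
    {μ : ChargedPartition | RemoveBoxC n γ μ i}.ncard = (TrS n γ i).ncard := by
  rw [remSet_eq]
  exact Set.ncard_image_of_injOn (remP_injOn n γ i)

end FockProof
namespace FockProof

open Classical in
noncomputable def DD (γ : ChargedPartition) (N : ℕ) (t : ℤ) : ℤ :=
  (((Finset.range N).filter (fun r => t < beta γ r ∧ 0 ≤ (r : ℤ) + t)).card : ℤ)

lemma lt_N_of_parts_ne {γ : ChargedPartition} {N : ℕ} (hN : ∀ j, N ≤ j → γ.parts j = 0)
    {r : ℕ} (h : γ.parts r ≠ 0) : r < N := by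
  by_contra hc
  exact h (hN r (not_lt.1 hc))

open Classical in
lemma DD_sub (γ : ChargedPartition) (N : ℕ) (hN : ∀ j, N ≤ j → γ.parts j = 0) (t : ℤ) :
    DD γ N t - DD γ N (t + 1) =
      (if inS γ (t + 1) then 1 else 0) - (if t < 0 then 1 else 0) := by
  classical
  set X := (Finset.range N).filter (fun r => t + 1 < beta γ r ∧ 0 ≤ (r : ℤ) + t) with hX
  set Y := (Finset.range N).filter (fun r => beta γ r = t + 1 ∧ 0 ≤ (r : ℤ) + t) with hY
  set Z := (Finset.range N).filter (fun r => t + 1 < beta γ r ∧ (r : ℤ) + t = -1) with hZ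
  have hdXY : Disjoint X Y := by
    rw [Finset.disjoint_filter]
    intro r _ h1 h2
    omega
  have hdXZ : Disjoint X Z := by
    rw [Finset.disjoint_filter]
    intro r _ h1 h2
    omega
  have e1 : DD γ N t = (X.card : ℤ) + Y.card := by
    have : (Finset.range N).filter (fun r => t < beta γ r ∧ 0 ≤ (r : ℤ) + t) = X ∪ Y := by
      ext r
      simp only [hX, hY, Finset.mem_filter, Finset.mem_union, Finset.mem_range]
      constructor
      · rintro ⟨h1, h2⟩
        rcases eq_or_lt_of_le (show t + 1 ≤ beta γ r by omega) with h | h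
        · exact Or.inr ⟨h1, h.symm, h2.2⟩
        · exact Or.inl ⟨h1, h, h2.2⟩
      · rintro (⟨h1, h2, h3⟩ | ⟨h1, h2, h3⟩) <;> exact ⟨h1, by omega, h3⟩
    rw [DD, this, Finset.card_union_of_disjoint hdXY]
    push_cast
    ring
  have e2 : DD γ N (t + 1) = (X.card : ℤ) + Z.card := by
    have : (Finset.range N).filter (fun r => t + 1 < beta γ r ∧ 0 ≤ (r : ℤ) + (t + 1)) = X ∪ Z := by
      ext r
      simp only [hX, hZ, Finset.mem_filter, Finset.mem_union, Finset.mem_range]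
      constructor
      · rintro ⟨h1, h2⟩
        rcases eq_or_lt_of_le (show -1 ≤ (r : ℤ) + t by omega) with h | h
        · exact Or.inr ⟨h1, h2.1, h.symm⟩
        · exact Or.inl ⟨h1, h2.1, by omega⟩
      · rintro (⟨h1, h2, h3⟩ | ⟨h1, h2, h3⟩) <;> exact ⟨h1, h2, by omega⟩
    rw [DD, this, Finset.card_union_of_disjoint hdXZ]
    push_cast
    ring
  rw [e1, e2]
  have key : (Y.card : ℤ) - Z.card =
      (if inS γ (t + 1) then 1 else 0) - (if t < 0 then 1 else 0) := by
    rcases le_or_gt 0 t with ht | ht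
    · -- t ≥ 0 : Z = ∅
      have hZe : Z = ∅ := by
        rw [hZ, Finset.filter_eq_empty_iff]
        intro r _
        omega
      by_cases h1 : inS γ (t + 1)
      · obtain ⟨r, hr⟩ := h1
        have hrN : r < N := by
          apply lt_N_of_parts_ne hN
          simp only [beta] at hr
          omega
        have hYe : Y = {r} := by
          ext r'
          simp only [hY, Finset.mem_filter, Finset.mem_range, Finset.mem_singleton]
          constructor
          · rintro ⟨-, hb, -⟩
            exact beta_inj (hb.trans hr.symm)
          · rintro rfl
            refine ⟨hrN, hr, ?_⟩
            simp only [beta] at hr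
            omega
        rw [hZe, hYe, if_pos ⟨r, hr⟩, if_neg (by omega)]
        simp
      · have hYe : Y = ∅ := by
          rw [hY, Finset.filter_eq_empty_iff]
          intro r _ hc
          exact h1 ⟨r, hc.1⟩
        rw [hZe, hYe, if_neg h1, if_neg (by omega)]
        simp
    · -- t < 0
      have hr0 : ((-1 - t).toNat : ℤ) = -1 - t := Int.toNat_of_nonneg (by omega)
      set r0 := (-1 - t).toNat with hr0def
      by_cases hz : γ.parts r0 = 0
      · have hbr0 : beta γ r0 = t + 1 := by
          simp only [beta, hz]
          omega
        have h1 : inS γ (t + 1) := ⟨r0, hbr0⟩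
        have hYe : Y = ∅ := by
          rw [hY, Finset.filter_eq_empty_iff]
          intro r _ hc
          have hgt : r0 < r := by omega
          have := beta_lt (γ := γ) hgt
          omega
        have hZe : Z = ∅ := by
          rw [hZ, Finset.filter_eq_empty_iff]
          intro r _ hc
          have : r = r0 := by omega
          subst this
          omega
        rw [hYe, hZe, if_pos h1, if_pos ht]
        simp
      · have hbr0 : t + 2 ≤ beta γ r0 := by
          simp only [beta]
          omega
        have hr0N : r0 < N := lt_N_of_parts_ne hN hz
        have hZe : Z = {r0} := by
          ext r
          simp only [hZ, Finset.mem_filter, Finset.mem_range, Finset.mem_singleton]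
          constructor
          · rintro ⟨-, -, hc⟩
            omega
          · rintro rfl
            exact ⟨hr0N, by omega, by omega⟩
        by_cases h1 : inS γ (t + 1)
        · obtain ⟨r, hr⟩ := h1
          have hgt : r0 < r := by
            have : r ≠ r0 := fun hc => by rw [hc] at hr; omega
            rcases Nat.lt_or_ge r0 r with h | h
            · exact h
            · have : r < r0 := by omega
              have := beta_lt (γ := γ) this
              omega
          have hrN : r < N := by
            apply lt_N_of_parts_ne hN
            simp only [beta] at hr
            omega
          have hYe : Y = {r} := by
            ext r'
            simp only [hY, Finset.mem_filter, Finset.mem_range, Finset.mem_singleton]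
            constructor
            · rintro ⟨-, hb, -⟩
              exact beta_inj (hb.trans hr.symm)
            · rintro rfl
              exact ⟨hrN, hr, by omega⟩
          rw [hYe, hZe, if_pos ⟨r, hr⟩, if_pos ht]
          simp
        · have hYe : Y = ∅ := by
            rw [hY, Finset.filter_eq_empty_iff]
            intro r _ hc
            exact h1 ⟨r, hc.1⟩
          rw [hYe, hZe, if_neg h1, if_pos ht]
          simp
  omega

open Classical in
lemma key_identity (γ : ChargedPartition) (N : ℕ) (hN : ∀ j, N ≤ j → γ.parts j = 0) (t : ℤ) :
    (if inS γ t ∧ ¬ inS γ (t + 1) then (1 : ℤ) else 0) -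
      (if inS γ (t + 1) ∧ ¬ inS γ t then (1 : ℤ) else 0) =
    DD γ N (t - 1) + DD γ N (t + 1) - 2 * DD γ N t + (if t = 0 then 1 else 0) := by
  classical
  have e1 := DD_sub γ N hN (t - 1)
  have e2 := DD_sub γ N hN t
  rw [show t - 1 + 1 = t by ring] at e1
  split_ifs at e1 e2 ⊢ <;> first | omega | tauto

end FockProof
namespace FockProof

open Classical in
lemma boxCount_eq (n : ℕ) (γ : ChargedPartition) (N : ℕ) (hN : ∀ j, N ≤ j → γ.parts j = 0)
    (F : Finset ℤ) (hF : Finset.Icc (-(N : ℤ)) ((γ.parts 0 : ℤ) - 1) ⊆ F) (c : ZMod n) :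
    (boxCount n γ c : ℤ) =
      ∑ s ∈ F.filter (fun s => ((γ.charge + s : ℤ) : ZMod n) = c), DD γ N s := by
  classical
  set Bfin := (Finset.range N ×ˢ Finset.range (γ.parts 0)).filter
    (fun p : ℕ × ℕ => p.2 < γ.parts p.1 ∧
      ((γ.charge + (p.2 : ℤ) - (p.1 : ℤ) : ℤ) : ZMod n) = c) with hBfin
  have hmem : ∀ p : ℕ × ℕ, p ∈ Bfin ↔
      p.2 < γ.parts p.1 ∧ ((γ.charge + (p.2 : ℤ) - (p.1 : ℤ) : ℤ) : ZMod n) = c := by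
    intro p
    simp only [hBfin, Finset.mem_filter, Finset.mem_product, Finset.mem_range]
    constructor
    · rintro ⟨-, h⟩; exact h
    · rintro ⟨h1, h2⟩
      have hr : p.1 < N := lt_N_of_parts_ne hN (by omega)
      have hc : p.2 < γ.parts 0 := lt_of_lt_of_le h1 (γ.antitone (Nat.zero_le _))
      exact ⟨⟨hr, hc⟩, h1, h2⟩
  -- step A : boxCount as a Finset card
  have eA : boxCount n γ c = Bfin.card := by
    rw [boxCount, show {p : ℕ × ℕ | p.2 < γ.parts p.1 ∧
        ((γ.charge + (p.2 : ℤ) - (p.1 : ℤ) : ℤ) : ZMod n) = c} = ↑Bfin by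
      ext p
      rw [Finset.mem_coe, hmem]
      rfl]
    exact Set.ncard_coe_finset _
  -- step B : decompose by content
  set Fc := F.filter (fun s => ((γ.charge + s : ℤ) : ZMod n) = c) with hFc
  have eB : Bfin = Fc.biUnion (fun s => Bfin.filter (fun p => (p.2 : ℤ) - (p.1 : ℤ) = s)) := by
    ext p
    simp only [Finset.mem_biUnion, Finset.mem_filter]
    constructor
    · intro hp
      refine ⟨(p.2 : ℤ) - (p.1 : ℤ), ?_, hp, rfl⟩
      rw [hFc, Finset.mem_filter]
      obtain ⟨h1, h2⟩ := (hmem p).1 hp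
      have hr : p.1 < N := lt_N_of_parts_ne hN (by omega)
      have hc : p.2 < γ.parts 0 := lt_of_lt_of_le h1 (γ.antitone (Nat.zero_le _))
      constructor
      · apply hF
        rw [Finset.mem_Icc]
        omega
      · rw [show γ.charge + ((p.2 : ℤ) - (p.1 : ℤ)) = γ.charge + (p.2 : ℤ) - (p.1 : ℤ) by ring]
        exact h2
    · rintro ⟨s, -, hp, -⟩
      exact hp
  have hdisj : ∀ s ∈ Fc, ∀ s' ∈ Fc, s ≠ s' →
      Disjoint (Bfin.filter (fun p => (p.2 : ℤ) - (p.1 : ℤ) = s))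
        (Bfin.filter (fun p => (p.2 : ℤ) - (p.1 : ℤ) = s')) := by
    intro s _ s' _ hss
    rw [Finset.disjoint_left]
    intro p hp hp'
    rw [Finset.mem_filter] at hp hp'
    exact hss (hp.2.symm.trans hp'.2)
  -- step C : each content class matches DD
  have eC : ∀ s ∈ Fc, ((Bfin.filter (fun p => (p.2 : ℤ) - (p.1 : ℤ) = s)).card : ℤ) = DD γ N s := by
    intro s hs
    rw [hFc, Finset.mem_filter] at hs
    rw [DD]
    congr 1
    apply Finset.card_nbij (i := Prod.fst)
    · intro p hp
      rw [Finset.mem_coe, Finset.mem_filter] at hp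
      obtain ⟨hpB, hps⟩ := hp
      obtain ⟨h1, -⟩ := (hmem p).1 hpB
      rw [hBfin, Finset.mem_filter, Finset.mem_product, Finset.mem_range,
        Finset.mem_range] at hpB
      simp only [Finset.mem_coe, Finset.mem_filter, Finset.mem_range]
      exact ⟨hpB.1.1, by simp only [beta]; omega, by omega⟩
    · intro p hp q hq hpq
      simp only [Finset.coe_filter, Set.mem_setOf_eq] at hp hq
      have : (p.2 : ℤ) = (q.2 : ℤ) := by omega
      exact Prod.ext hpq (by omega)
    · intro r hr
      simp only [Finset.coe_filter, Set.mem_setOf_eq, Finset.mem_range] at hr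
      obtain ⟨hrN, hbs, hrs⟩ := hr
      have htn : ((((r : ℤ) + s).toNat : ℤ)) = (r : ℤ) + s := Int.toNat_of_nonneg hrs
      refine ⟨(r, ((r : ℤ) + s).toNat), ?_, rfl⟩
      simp only [Finset.coe_filter, Set.mem_setOf_eq, hmem]
      simp only [beta] at hbs
      refine ⟨⟨?_, ?_⟩, ?_⟩
      · omega
      · rw [show γ.charge + ((((r : ℤ) + s).toNat : ℤ)) - (r : ℤ) = γ.charge + s by omega]
        exact hs.2
      · omega
  rw [eA, eB, Finset.card_biUnion hdisj]
  push_cast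
  exact Finset.sum_congr rfl eC

end FockProof
namespace FockProof

lemma sum_shift (f : ℤ → ℤ) (a b c : ℤ) :
    ∑ t ∈ Finset.Icc (a + c) (b + c), f t = ∑ s ∈ Finset.Icc a b, f (s + c) := by
  rw [← Finset.map_add_right_Icc, Finset.sum_map]
  simp [addRightEmbedding]

open Classical in
lemma diff_formula (n : ℕ) (γ : ChargedPartition) (i : ZMod n) :
    ((TaS n γ i).ncard : ℤ) - ((TrS n γ i).ncard : ℤ) =
      (boxCount n γ (i - 1) : ℤ) + (boxCount n γ (i + 1) : ℤ) - 2 * (boxCount n γ i : ℤ)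
        + (if ((γ.charge : ZMod n)) = i then 1 else 0) := by
  classical
  obtain ⟨N, hN⟩ := γ.eventually_zero
  have ea : ((TaS n γ i).ncard : ℤ) =
      ∑ t ∈ Finset.Icc (-(N : ℤ) - 1) ((γ.parts 0 : ℤ) + 1),
        (if inS γ t ∧ ¬ inS γ (t + 1) ∧ ((γ.charge + t : ℤ) : ZMod n) = i then (1:ℤ) else 0) := by
    have hset : TaS n γ i = ↑((Finset.Icc (-(N : ℤ) - 1) ((γ.parts 0 : ℤ) + 1)).filter
        (fun t => inS γ t ∧ ¬ inS γ (t + 1) ∧ ((γ.charge + t : ℤ) : ZMod n) = i)) := by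
      ext t
      simp only [Finset.coe_filter, Set.mem_setOf_eq, Finset.mem_Icc]
      constructor
      · intro ht
        have hb := TaS_subset n γ i hN ht
        rw [Set.mem_Icc] at hb
        exact ⟨⟨by omega, by omega⟩, ht⟩
      · rintro ⟨-, h⟩
        exact h
    rw [hset, Set.ncard_coe_finset, Finset.card_filter]
    push_cast
    rfl
  have er : ((TrS n γ i).ncard : ℤ) =
      ∑ t ∈ Finset.Icc (-(N : ℤ) - 1) ((γ.parts 0 : ℤ) + 1),
        (if inS γ (t + 1) ∧ ¬ inS γ t ∧ ((γ.charge + t : ℤ) : ZMod n) = i then (1:ℤ) else 0) := by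
    have hset : TrS n γ i = ↑((Finset.Icc (-(N : ℤ) - 1) ((γ.parts 0 : ℤ) + 1)).filter
        (fun t => inS γ (t + 1) ∧ ¬ inS γ t ∧ ((γ.charge + t : ℤ) : ZMod n) = i)) := by
      ext t
      simp only [Finset.coe_filter, Set.mem_setOf_eq, Finset.mem_Icc]
      constructor
      · intro ht
        have hb := TrS_subset n γ i hN ht
        rw [Set.mem_Icc] at hb
        exact ⟨⟨by omega, by omega⟩, ht⟩
      · rintro ⟨-, h⟩
        exact h
    rw [hset, Set.ncard_coe_finset, Finset.card_filter]
    push_cast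
    rfl
  rw [ea, er, ← Finset.sum_sub_distrib]
  -- pointwise identity
  have hpt : ∀ t : ℤ,
      (if inS γ t ∧ ¬ inS γ (t + 1) ∧ ((γ.charge + t : ℤ) : ZMod n) = i then (1:ℤ) else 0) -
      (if inS γ (t + 1) ∧ ¬ inS γ t ∧ ((γ.charge + t : ℤ) : ZMod n) = i then (1:ℤ) else 0) =
      (if ((γ.charge + t : ℤ) : ZMod n) = i then DD γ N (t - 1) else 0) +
      (if ((γ.charge + t : ℤ) : ZMod n) = i then DD γ N (t + 1) else 0) -
      2 * (if ((γ.charge + t : ℤ) : ZMod n) = i then DD γ N t else 0) +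
      (if t = 0 ∧ ((γ.charge + t : ℤ) : ZMod n) = i then 1 else 0) := by
    intro t
    by_cases hcol : ((γ.charge + t : ℤ) : ZMod n) = i
    · simp only [hcol, and_true, if_true, if_pos]
      exact key_identity γ N hN t
    · simp only [hcol, and_false, if_false, if_neg]
      ring
  rw [Finset.sum_congr rfl (fun t _ => hpt t)]
  rw [Finset.sum_add_distrib, Finset.sum_sub_distrib, Finset.sum_add_distrib, ← Finset.mul_sum]
  -- delta term
  have hdelta : ∑ t ∈ Finset.Icc (-(N : ℤ) - 1) ((γ.parts 0 : ℤ) + 1),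
      (if t = 0 ∧ ((γ.charge + t : ℤ) : ZMod n) = i then (1:ℤ) else 0) =
      (if ((γ.charge : ZMod n)) = i then 1 else 0) := by
    have h0 : (0 : ℤ) ∈ Finset.Icc (-(N : ℤ) - 1) ((γ.parts 0 : ℤ) + 1) := by
      rw [Finset.mem_Icc]
      constructor <;> [omega; positivity]
    rw [Finset.sum_congr rfl (fun t _ => ite_and (t = 0) _ (1:ℤ) 0),
      Finset.sum_ite_eq' _ (0 : ℤ), if_pos h0]
    norm_num
  rw [hdelta]
  -- middle term
  have hmid : ∑ t ∈ Finset.Icc (-(N : ℤ) - 1) ((γ.parts 0 : ℤ) + 1),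
      (if ((γ.charge + t : ℤ) : ZMod n) = i then DD γ N t else 0) = (boxCount n γ i : ℤ) := by
    rw [boxCount_eq n γ N hN (Finset.Icc (-(N : ℤ) - 1) ((γ.parts 0 : ℤ) + 1))
      (Finset.Icc_subset_Icc (by omega) (by omega)) i, Finset.sum_filter]
  -- minus-shift term
  have hm1 : ∑ t ∈ Finset.Icc (-(N : ℤ) - 1) ((γ.parts 0 : ℤ) + 1),
      (if ((γ.charge + t : ℤ) : ZMod n) = i then DD γ N (t - 1) else 0) =
      (boxCount n γ (i - 1) : ℤ) := by
    rw [show (-(N : ℤ) - 1) = (-(N : ℤ) - 2) + 1 by ring,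
      show ((γ.parts 0 : ℤ) + 1) = (γ.parts 0 : ℤ) + 1 by rfl]
    rw [show Finset.Icc (-(N : ℤ) - 2 + 1) ((γ.parts 0 : ℤ) + 1) =
      Finset.Icc (-(N : ℤ) - 2 + 1) ((γ.parts 0 : ℤ) + 1) from rfl]
    have := sum_shift (fun t => if ((γ.charge + t : ℤ) : ZMod n) = i then DD γ N (t - 1) else 0)
      (-(N : ℤ) - 2) ((γ.parts 0 : ℤ)) 1
    rw [show (γ.parts 0 : ℤ) + 1 = (γ.parts 0 : ℤ) + 1 from rfl] at this
    rw [this]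
    have hcongr : ∀ s ∈ Finset.Icc (-(N : ℤ) - 2) ((γ.parts 0 : ℤ)),
        (if ((γ.charge + (s + 1) : ℤ) : ZMod n) = i then DD γ N (s + 1 - 1) else 0) =
        (if ((γ.charge + s : ℤ) : ZMod n) = i - 1 then DD γ N s else 0) := by
      intro s _
      have h1 : ((γ.charge + (s + 1) : ℤ) : ZMod n) = ((γ.charge + s : ℤ) : ZMod n) + 1 := by
        push_cast
        ring
      have h2 : (((γ.charge + s : ℤ) : ZMod n) + 1 = i) ↔ (((γ.charge + s : ℤ) : ZMod n) = i - 1) := by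
        constructor <;> intro h <;> [rw [← h]; rw [h]] <;> ring
      rw [h1, show s + 1 - 1 = s by ring]
      by_cases h : ((γ.charge + s : ℤ) : ZMod n) = i - 1
      · rw [if_pos (h2.2 h), if_pos h]
      · rw [if_neg (fun hc => h (h2.1 hc)), if_neg h]
    rw [Finset.sum_congr rfl hcongr]
    rw [boxCount_eq n γ N hN (Finset.Icc (-(N : ℤ) - 2) ((γ.parts 0 : ℤ)))
      (Finset.Icc_subset_Icc (by omega) (by omega)) (i - 1), Finset.sum_filter]
  -- plus-shift term
  have hp1 : ∑ t ∈ Finset.Icc (-(N : ℤ) - 1) ((γ.parts 0 : ℤ) + 1),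
      (if ((γ.charge + t : ℤ) : ZMod n) = i then DD γ N (t + 1) else 0) =
      (boxCount n γ (i + 1) : ℤ) := by
    have := sum_shift (fun t => if ((γ.charge + t : ℤ) : ZMod n) = i then DD γ N (t + 1) else 0)
      (-(N : ℤ)) ((γ.parts 0 : ℤ) + 2) (-1)
    rw [show -(N : ℤ) + -1 = -(N : ℤ) - 1 by ring,
      show (γ.parts 0 : ℤ) + 2 + -1 = (γ.parts 0 : ℤ) + 1 by ring] at this
    rw [this]
    have hcongr : ∀ s ∈ Finset.Icc (-(N : ℤ)) ((γ.parts 0 : ℤ) + 2),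
        (if ((γ.charge + (s + -1) : ℤ) : ZMod n) = i then DD γ N (s + -1 + 1) else 0) =
        (if ((γ.charge + s : ℤ) : ZMod n) = i + 1 then DD γ N s else 0) := by
      intro s _
      have h1 : ((γ.charge + (s + -1) : ℤ) : ZMod n) = ((γ.charge + s : ℤ) : ZMod n) - 1 := by
        push_cast
        ring
      have h2 : (((γ.charge + s : ℤ) : ZMod n) - 1 = i) ↔ (((γ.charge + s : ℤ) : ZMod n) = i + 1) := by
        constructor <;> intro h <;> [rw [← h]; rw [h]] <;> ring
      rw [h1, show s + -1 + 1 = s by ring]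
      by_cases h : ((γ.charge + s : ℤ) : ZMod n) = i + 1
      · rw [if_pos (h2.2 h), if_pos h]
      · rw [if_neg (fun hc => h (h2.1 hc)), if_neg h]
    rw [Finset.sum_congr rfl hcongr]
    rw [boxCount_eq n γ N hN (Finset.Icc (-(N : ℤ)) ((γ.parts 0 : ℤ) + 2))
      (Finset.Icc_subset_Icc (by omega) (by omega)) (i + 1), Finset.sum_filter]
  rw [hmid, hm1, hp1]

end FockProof
/-- for every charged partition γ and residue i mod n, the sets of
addable and removable i-colored boxes are finite, and the difference
a_i(γ) − r_i(γ) equals ⟨wt(γ), α_i⟩; equivalently, it depends only on the charge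
of γ together with the numbers of boxes of γ of each color. -/
theorem fock_addable_sub_removable (n : ℕ) (hn : 2 ≤ n) (i : ZMod n) :
    (∀ γ : ChargedPartition,
        {μ : ChargedPartition | AddBoxC n γ μ i}.Finite ∧
        {μ : ChargedPartition | RemoveBoxC n γ μ i}.Finite) ∧
    (∀ γ γ' : ChargedPartition, γ.charge = γ'.charge →
        (∀ c : ZMod n, boxCount n γ c = boxCount n γ' c) →
        (Set.ncard {μ : ChargedPartition | AddBoxC n γ μ i} : ℤ) -
          (Set.ncard {μ : ChargedPartition | RemoveBoxC n γ μ i} : ℤ) =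
        (Set.ncard {μ : ChargedPartition | AddBoxC n γ' μ i} : ℤ) -
          (Set.ncard {μ : ChargedPartition | RemoveBoxC n γ' μ i} : ℤ)) := by
  constructor
  · intro γ
    exact ⟨FockProof.addSet_finite n γ i, FockProof.remSet_finite n γ i⟩
  · intro γ γ' hch hbc
    rw [FockProof.addSet_ncard n γ i, FockProof.remSet_ncard n γ i,
      FockProof.addSet_ncard n γ' i, FockProof.remSet_ncard n γ' i,
      FockProof.diff_formula n γ i, FockProof.diff_formula n γ' i,
      hch, hbc (i - 1), hbc (i + 1), hbc i]
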